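/- The N points y_1, …, y_N in ℝ^N defined by (y_k)_j = 2π(k/N − δ_{k ≥ j}) all lie in the hyperplane {θ ∈ ℝ^N : Σ_j θ_j = 0}, and their convex hull Ψ is an (N−1)-simplex whose image under θ ↦ diag(e^{iθ_1}, …, e^{iθ_N}) is a cell in the maximal torus of SU(N): every point in the boundary of Ψ maps to a matrix with a repeated eigenvalue, and every point in the interior of Ψ maps to a matrix with N distinct eigenvalues. -/

import Mathlib

open Complex Real

/-- Vertices of the canonical cell: `(y_k)_j = 2π (k/N − δ_{k ≥ j})`
(with `k, j` running over `1, …, N`, here implemented zero-based). -/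
noncomputable def canonVertex (N : ℕ) (k j : Fin N) : ℝ :=
  2 * Real.pi * (((k : ℕ) + 1 : ℝ) / N - if (j : ℕ) ≤ (k : ℕ) then 1 else 0)

lemma canonVertex_sub (N : ℕ) (k i j : Fin N) (hij : (i : ℕ) ≤ (j : ℕ)) :
    canonVertex N k i - canonVertex N k j
      = if (i : ℕ) ≤ (k : ℕ) ∧ (k : ℕ) < (j : ℕ) then -(2 * Real.pi) else 0 := by
  unfold canonVertex
  split_ifs with h1 h2 h3 h3 h2 h3 h3 <;> first | ring1 | (exfalso; omega)

lemma canonSum_sub (N : ℕ) (γ : Fin N → ℝ) (i j : Fin N) (hij : (i : ℕ) ≤ (j : ℕ)) :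
    (∑ k, γ k * canonVertex N k i) - ∑ k, γ k * canonVertex N k j
      = -(2 * Real.pi) *
          ∑ k ∈ Finset.univ.filter (fun k : Fin N => (i : ℕ) ≤ (k : ℕ) ∧ (k : ℕ) < (j : ℕ)), γ k := by
  rw [← Finset.sum_sub_distrib, Finset.mul_sum, ← Finset.sum_filter_add_sum_filter_not
    Finset.univ (fun k : Fin N => (i : ℕ) ≤ (k : ℕ) ∧ (k : ℕ) < (j : ℕ))
    (fun k => γ k * canonVertex N k i - γ k * canonVertex N k j)]
  have h1 : ∀ k ∈ Finset.univ.filter (fun k : Fin N => (i : ℕ) ≤ (k : ℕ) ∧ (k : ℕ) < (j : ℕ)),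
      γ k * canonVertex N k i - γ k * canonVertex N k j = -(2 * Real.pi) * γ k := by
    intro k hk
    rw [Finset.mem_filter] at hk
    rw [← mul_sub, canonVertex_sub N k i j hij, if_pos hk.2]; ring
  have h2 : ∀ k ∈ Finset.univ.filter (fun k : Fin N => ¬((i : ℕ) ≤ (k : ℕ) ∧ (k : ℕ) < (j : ℕ))),
      γ k * canonVertex N k i - γ k * canonVertex N k j = 0 := by
    intro k hk
    rw [Finset.mem_filter] at hk
    rw [← mul_sub, canonVertex_sub N k i j hij, if_neg hk.2]; ring
  rw [Finset.sum_congr rfl h1, Finset.sum_congr rfl h2, Finset.sum_const_zero, add_zero]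

/-- The points `y_1, …, y_N` lie in the hyperplane `Σ θ = 0`, are
affinely independent (so their convex hull `Ψ` is an `(N−1)`-simplex), and the
image of `Ψ` under `θ ↦ diag(e^{iθ_1}, …, e^{iθ_N})` is a cell in the maximal
torus of `SU(N)`: every boundary point of `Ψ` (some barycentric coordinate
`γ_k = 0`) maps to a matrix with a repeated eigenvalue, and every interior
point (all `γ_k > 0`) maps to a matrix with `N` distinct eigenvalues. -/
theorem canonVertex_defines_cell (N : ℕ) (hN : 2 ≤ N) :
    (∀ k : Fin N, ∑ j : Fin N, canonVertex N k j = 0) ∧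
    AffineIndependent ℝ (fun k : Fin N => (canonVertex N k : Fin N → ℝ)) ∧
    (∀ γ : Fin N → ℝ, (∀ k, 0 ≤ γ k) → ∑ k, γ k = 1 → (∃ k, γ k = 0) →
      ∃ i j : Fin N, i ≠ j ∧
        Complex.exp ((∑ k, γ k * canonVertex N k i) * Complex.I) =
          Complex.exp ((∑ k, γ k * canonVertex N k j) * Complex.I)) ∧
    (∀ γ : Fin N → ℝ, (∀ k, 0 < γ k) → ∑ k, γ k = 1 →
      ∀ i j : Fin N, i ≠ j →
        Complex.exp ((∑ k, γ k * canonVertex N k i) * Complex.I) ≠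
          Complex.exp ((∑ k, γ k * canonVertex N k j) * Complex.I)) := by
  have hN0 : (N : ℝ) ≠ 0 := by positivity
  -- count of j with j ≤ k
  have hcount : ∀ k : Fin N, ∑ j : Fin N, (if (j : ℕ) ≤ (k : ℕ) then (1 : ℝ) else 0)
      = (k : ℕ) + 1 := by
    intro k
    rw [Fin.sum_univ_eq_sum_range (fun j => if j ≤ (k : ℕ) then (1 : ℝ) else 0) N,
      ← Finset.sum_filter]
    have : (Finset.range N).filter (· ≤ (k : ℕ)) = Finset.range ((k : ℕ) + 1) := by
      ext m; simp only [Finset.mem_filter, Finset.mem_range]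
      have := k.isLt; omega
    rw [this]; simp
  refine ⟨?_, ?_, ?_, ?_⟩
  · -- sums to zero
    intro k
    unfold canonVertex
    rw [← Finset.mul_sum, Finset.sum_sub_distrib, hcount, Finset.sum_const, Finset.card_univ,
      Fintype.card_fin, nsmul_eq_mul]
    field_simp
    ring
  · -- affine independence
    rw [affineIndependent_iff]
    intro s w hw0 hwp e he
    set W : Fin N → ℝ := fun k => if k ∈ s then w k else 0 with hW
    have hWuniv : ∑ k, W k = 0 := by
      rw [hW]; simp only [Finset.sum_ite_mem, Finset.univ_inter]; exact hw0
    have hWp : ∀ j : Fin N, ∑ k, W k * canonVertex N k j = 0 := by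
      intro j
      have : (∑ k ∈ s, w k • (canonVertex N k : Fin N → ℝ)) j = 0 := by rw [hwp]; rfl
      rw [Finset.sum_apply] at this
      calc ∑ k, W k * canonVertex N k j
          = ∑ k ∈ s, w k * canonVertex N k j := by
            rw [hW]
            simp only [ite_mul, zero_mul, Finset.sum_ite_mem, Finset.univ_inter]
        _ = 0 := this
    have hTj : ∀ j : Fin N, (∑ k : Fin N, if (j : ℕ) ≤ (k : ℕ) then W k else 0)
        = ∑ k : Fin N, W k * (((k : ℕ) + 1 : ℝ) / N) := by
      intro j
      have h := hWp j
      unfold canonVertex at h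
      have h2 : ∑ k : Fin N, W k * (2 * Real.pi * (((k : ℕ) + 1 : ℝ) / N
          - if (j : ℕ) ≤ (k : ℕ) then 1 else 0))
          = 2 * Real.pi * ((∑ k : Fin N, W k * (((k : ℕ) + 1 : ℝ) / N))
            - ∑ k : Fin N, if (j : ℕ) ≤ (k : ℕ) then W k else 0) := by
        rw [mul_sub, Finset.mul_sum, Finset.mul_sum, ← Finset.sum_sub_distrib]
        refine Finset.sum_congr rfl fun k _ => ?_
        split_ifs <;> ring
      rw [h2] at h
      have hpi : 2 * Real.pi ≠ 0 := by positivity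
      rcases mul_eq_zero.1 h with h' | h'
      · exact absurd h' hpi
      · linarith [sub_eq_zero.1 h']
    have hc0 : (∑ k : Fin N, W k * (((k : ℕ) + 1 : ℝ) / N)) = 0 := by
      have h := hTj ⟨0, by omega⟩
      rw [← h]
      simpa using hWuniv
    have hTall : ∀ m : ℕ, (∑ k : Fin N, if m ≤ (k : ℕ) then W k else 0) = 0 := by
      intro m
      by_cases hm : m < N
      · have h := hTj ⟨m, hm⟩
        rw [hc0] at h
        exact h
      · refine Finset.sum_eq_zero fun k _ => ?_
        rw [if_neg (by have := k.isLt; omega)]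
    have hWe : W e = 0 := by
      have key : (∑ k : Fin N, if (e : ℕ) ≤ (k : ℕ) then W k else 0)
          - (∑ k : Fin N, if (e : ℕ) + 1 ≤ (k : ℕ) then W k else 0) = W e := by
        rw [← Finset.sum_sub_distrib]
        have : ∀ k : Fin N,
            ((if (e : ℕ) ≤ (k : ℕ) then W k else 0) - if (e : ℕ) + 1 ≤ (k : ℕ) then W k else 0)
            = if k = e then W k else 0 := by
          intro k
          rcases eq_or_ne k e with rfl | hke
          · rw [if_pos le_rfl, if_neg (by omega), if_pos rfl]; ring
          · have hne : (k : ℕ) ≠ (e : ℕ) := fun h => hke (Fin.ext h)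
            rw [if_neg hke]
            split_ifs with h1 h2 h2 <;> first | ring1 | (exfalso; omega)
        rw [Finset.sum_congr rfl fun k _ => this k, Finset.sum_ite_eq' Finset.univ e W,
          if_pos (Finset.mem_univ e)]
      rw [hTall, hTall, sub_zero] at key
      exact key.symm
    rw [hW] at hWe
    simpa [he] using hWe
  · -- boundary
    intro γ hγ0 hγ1 ⟨k0, hk0⟩
    by_cases hk : (k0 : ℕ) + 1 < N
    · refine ⟨k0, ⟨(k0 : ℕ) + 1, hk⟩, ?_, ?_⟩
      · intro h
        have : (k0 : ℕ) = (k0 : ℕ) + 1 := congrArg Fin.val h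
        omega
      · have hsub := canonSum_sub N γ k0 ⟨(k0 : ℕ) + 1, hk⟩ (Nat.le_succ _)
        have hfilter : Finset.univ.filter
            (fun k : Fin N => (k0 : ℕ) ≤ (k : ℕ) ∧ (k : ℕ) < (k0 : ℕ) + 1) = {k0} := by
          ext k
          simp only [Finset.mem_filter, Finset.mem_univ, true_and, Finset.mem_singleton]
          constructor
          · intro h; exact Fin.ext (by omega)
          · intro h; subst h; omega
        rw [hfilter, Finset.sum_singleton, hk0, mul_zero, sub_eq_zero] at hsub
        rw [hsub]
    · -- k0 is the last index
      have hk0N : (k0 : ℕ) = N - 1 := by have := k0.isLt; omega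
      refine ⟨⟨0, by omega⟩, k0, ?_, ?_⟩
      · intro h
        have : (0 : ℕ) = (k0 : ℕ) := congrArg Fin.val h
        omega
      · have hsub := canonSum_sub N γ ⟨0, by omega⟩ k0 (Nat.zero_le _)
        have hfilter : Finset.univ.filter
            (fun k : Fin N => (0 : ℕ) ≤ (k : ℕ) ∧ (k : ℕ) < (k0 : ℕ)) = Finset.univ.erase k0 := by
          ext k
          simp only [Finset.mem_filter, Finset.mem_univ, true_and, Finset.mem_erase, and_true]
          have := k.isLt
          constructor
          · intro h he; subst he; omega
          · intro h
            refine ⟨Nat.zero_le _, ?_⟩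
            have : (k : ℕ) ≠ (k0 : ℕ) := fun hh => h (Fin.ext hh)
            omega
        have herase : ∑ k ∈ Finset.univ.erase k0, γ k = 1 := by
          have := Finset.add_sum_erase Finset.univ γ (Finset.mem_univ k0)
          rw [hγ1] at this
          linarith [this.symm, hk0]
        rw [hfilter, herase, mul_one] at hsub
        have hval : (∑ k, γ k * canonVertex N k ⟨0, by omega⟩ : ℝ)
            = (∑ k, γ k * canonVertex N k k0) - 2 * Real.pi := by linarith
        rw [Complex.exp_eq_exp_iff_exists_int]
        exact ⟨-1, by rw [hval]; push_cast; ring⟩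
  · -- interior
    intro γ hγ0 hγ1 i j hij
    -- symmetric helper
    have key : ∀ i j : Fin N, (i : ℕ) < (j : ℕ) →
        Complex.exp ((∑ k, γ k * canonVertex N k i) * Complex.I) ≠
          Complex.exp ((∑ k, γ k * canonVertex N k j) * Complex.I) := by
      intro i j hlt heq
      set S : ℝ := ∑ k ∈ Finset.univ.filter
        (fun k : Fin N => (i : ℕ) ≤ (k : ℕ) ∧ (k : ℕ) < (j : ℕ)), γ k with hS
      have hsub := canonSum_sub N γ i j (le_of_lt hlt)
      have hSpos : 0 < S := by
        rw [hS]
        refine Finset.sum_pos (fun k _ => hγ0 k) ⟨i, ?_⟩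
        simp only [Finset.mem_filter, Finset.mem_univ, true_and]
        omega
      have hSlt : S < 1 := by
        have hsubset : Finset.univ.filter
            (fun k : Fin N => (i : ℕ) ≤ (k : ℕ) ∧ (k : ℕ) < (j : ℕ)) ⊆ Finset.univ.erase j := by
          intro k hk
          simp only [Finset.mem_filter, Finset.mem_univ, true_and] at hk
          refine Finset.mem_erase.2 ⟨fun he => ?_, Finset.mem_univ k⟩
          subst he; omega
        have h1 : S ≤ ∑ k ∈ Finset.univ.erase j, γ k :=
          Finset.sum_le_sum_of_subset_of_nonneg hsubset (fun k _ _ => le_of_lt (hγ0 k))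
        have h2 : ∑ k ∈ Finset.univ.erase j, γ k = 1 - γ j := by
          have := Finset.add_sum_erase Finset.univ γ (Finset.mem_univ j)
          rw [hγ1] at this; linarith [this.symm]
        have := hγ0 j
        linarith
      rw [Complex.exp_eq_exp_iff_exists_int] at heq
      obtain ⟨n, hn⟩ := heq
      have hreal : (∑ k, γ k * canonVertex N k i : ℝ)
          = (∑ k, γ k * canonVertex N k j) + 2 * Real.pi * n := by
        have h1 : ((∑ k, γ k * canonVertex N k i : ℝ) : ℂ)
            = (((∑ k, γ k * canonVertex N k j) + 2 * Real.pi * n : ℝ) : ℂ) := by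
          apply mul_right_cancel₀ Complex.I_ne_zero
          rw [hn]
          push_cast
          ring
        exact_mod_cast h1
      rw [← hS] at hsub
      have hSn : S = -(n : ℝ) := by
        have h3 : -(2 * Real.pi) * S = 2 * Real.pi * (n : ℝ) := by
          rw [← hsub]; linarith [hreal]
        have h2 : 2 * Real.pi * S = 2 * Real.pi * (-(n : ℝ)) := by linarith
        have hpi : (0:ℝ) < 2 * Real.pi := by positivity
        exact mul_left_cancel₀ (ne_of_gt hpi) h2
      have h1 : (0 : ℝ) < -(n : ℝ) := hSn ▸ hSpos
      have h2 : (-(n : ℝ)) < 1 := hSn ▸ hSlt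
      have h1' : 0 < -n := by exact_mod_cast h1
      have h2' : -n < 1 := by exact_mod_cast h2
      omega
    rcases lt_or_gt_of_ne (fun h : (i : ℕ) = (j : ℕ) => hij (Fin.ext h)) with h | h
    · exact key i j h
    · exact fun he => key j i h he.symm
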